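/- Let p* ∈ (0, 1/2) and let r:𝒳→{0,1} be a measurable binary function such that r(x) = 1 whenever e(x) < p* and r(x) = 0 whenever e(x) > 1−p*. Define, for bounded measurable candidates τ̃, μ̃0, μ̃1 and measurable ẽ with 0 < ẽ(X) < 1 a.s. and with r(X)/(1−ẽ(X)) + (1−r(X))/ẽ(X) a.s. bounded, the residual Ψ[τ̃, ẽ, (μ̃0,μ̃1)] = (W·r(X) + (1−W)(1−r(X)))·τ̃(X) − (r(X)/(1−ẽ(X)) + (1−r(X))/ẽ(X))·(W−ẽ(X))·(Y − r(X)·μ̃0(X) − (1−r(X))·μ̃1(X)). Then, almost surely, E[Ψ[τ̃, e, (μ̃0,μ̃1)] | σ(X)] = E[Ψ[τ̃, ẽ, (μ0,μ1)] | σ(X)] = E[Ψ[τ̃, e, (μ0,μ1)] | σ(X)] = (r(X)·e(X) + (1−r(X))·(1−e(X)))·(τ̃(X)−τ(X)) (global double robustness), and these vanish a.s. if and only if τ̃(X) = τ(X) a.s.; in particular, at the truth E[Ψ[τ, e, (μ0,μ1)] | σ(X)] = 0 a.s. with a.s. finite conditional variance. -/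

import Mathlib

open MeasureTheory ProbabilityTheory Filter Set

/-- The sub-σ-algebra σ(X) generated by a random element `X`. -/
abbrev sigmaAlg {Ω 𝒳 : Type*} [m𝒳 : MeasurableSpace 𝒳] (X : Ω → 𝒳) : MeasurableSpace Ω :=
  MeasurableSpace.comap X m𝒳

open scoped ENNReal NNReal

lemma integrable_of_ae_bound' {Ω : Type*} {mΩ : MeasurableSpace Ω} {P : Measure Ω}
    [IsFiniteMeasure P] {f : Ω → ℝ} (hf : AEStronglyMeasurable f P) {C : ℝ}
    (h : ∀ᵐ ω ∂P, |f ω| ≤ C) : Integrable f P :=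
  Integrable.mono' (integrable_const C) hf (h.mono fun ω h => by rwa [Real.norm_eq_abs])

lemma condexp_indicator_mul_aux {Ω : Type*} {m' : MeasurableSpace Ω} [mΩ : MeasurableSpace Ω]
    (P : Measure Ω) [IsProbabilityMeasure P] (hm' : m' ≤ mΩ)
    {A : Set Ω} (hA : MeasurableSet A)
    {Z : Ω → ℝ} (hZ : Measurable Z) {CZ : ℝ} (hZb : ∀ ω, |Z ω| ≤ CZ)
    {g ζ : Ω → ℝ} (hgm : Measurable[m'] g) (hζm : Measurable[m'] ζ)
    (hg0 : ∀ ω, 0 ≤ g ω) (hg1 : ∀ ω, g ω ≤ 1) {Cζ : ℝ} (hζb : ∀ ω, |ζ ω| ≤ Cζ)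
    (hgc : P[A.indicator (fun _ => (1:ℝ))|m'] =ᵐ[P] g)
    (hζc : P[Z|m'] =ᵐ[P] ζ)
    (hind : ∀ t : Set ℝ, MeasurableSet t →
      ((P⟦A ∩ Z ⁻¹' t|m'⟧) =ᵐ[P] fun ω => (P⟦A|m'⟧) ω * (P⟦Z ⁻¹' t|m'⟧) ω)) :
    P[fun ω => A.indicator (fun _ => (1:ℝ)) ω * Z ω|m'] =ᵐ[P] fun ω => g ω * ζ ω := by
  have hgmΩ : Measurable g := hgm.mono hm' le_rfl
  have hζmΩ : Measurable ζ := hζm.mono hm' le_rfl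
  have hgb : ∀ ω, |g ω| ≤ 1 := fun ω => abs_le.2 ⟨by linarith [hg0 ω], hg1 ω⟩
  have hint_ind : Integrable (fun ω => A.indicator (fun _ => (1:ℝ)) ω * Z ω) P := by
    refine integrable_of_ae_bound' ?_ (ae_of_all _ (fun ω => ?_) : ∀ᵐ ω ∂P, _ ≤ |CZ|)
    · exact ((measurable_one.indicator hA).mul hZ).aestronglyMeasurable
    · rw [abs_mul]
      have h1 : |A.indicator (fun _ => (1:ℝ)) ω| ≤ 1 := by
        by_cases h : ω ∈ A <;> simp [Set.indicator_of_mem, Set.indicator_of_notMem, h]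
      calc |A.indicator (fun _ => (1:ℝ)) ω| * |Z ω| ≤ 1 * |Z ω| :=
            mul_le_mul_of_nonneg_right h1 (abs_nonneg _)
        _ ≤ |CZ| := by rw [one_mul]; exact (hZb ω).trans (le_abs_self _)
  have hgζ_int : Integrable (fun ω => g ω * ζ ω) P := by
    refine integrable_of_ae_bound' (hgmΩ.mul hζmΩ).aestronglyMeasurable
      (ae_of_all _ fun ω => ?_ : ∀ᵐ ω ∂P, _ ≤ |Cζ|)
    rw [abs_mul]
    calc |g ω| * |ζ ω| ≤ 1 * |Cζ| := by
          exact mul_le_mul (hgb ω) ((hζb ω).trans (le_abs_self _)) (abs_nonneg _) zero_le_one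
      _ = |Cζ| := one_mul _
  -- the main set-integral identity
  have key : ∀ s : Set Ω, MeasurableSet[m'] s →
      ∫ ω in s, g ω * ζ ω ∂P = ∫ ω in s, A.indicator (fun _ => (1:ℝ)) ω * Z ω ∂P := by
    intro s hs
    have hsΩ : MeasurableSet s := hm' s hs
    have hZint : Integrable Z P :=
      integrable_of_ae_bound' hZ.aestronglyMeasurable (ae_of_all _ hZb)
    -- Step 1 : ∫_s g ζ = ∫_s g Z
    have hgZ_int : Integrable (fun ω => g ω * Z ω) P := by
      refine integrable_of_ae_bound' (hgmΩ.mul hZ).aestronglyMeasurable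
        (ae_of_all _ fun ω => ?_ : ∀ᵐ ω ∂P, _ ≤ |CZ|)
      rw [abs_mul]
      calc |g ω| * |Z ω| ≤ 1 * |CZ| :=
            mul_le_mul (hgb ω) ((hZb ω).trans (le_abs_self _)) (abs_nonneg _) zero_le_one
        _ = |CZ| := one_mul _
    have hpull : P[fun ω => g ω * Z ω|m'] =ᵐ[P] fun ω => g ω * (P[Z|m']) ω := by
      have := condExp_mul_of_stronglyMeasurable_left (μ := P) hgm.stronglyMeasurable hgZ_int hZint
      exact this
    have step1 : ∫ ω in s, g ω * ζ ω ∂P = ∫ ω in s, g ω * Z ω ∂P := by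
      have e1 : ∫ ω in s, g ω * ζ ω ∂P = ∫ ω in s, g ω * (P[Z|m']) ω ∂P := by
        refine setIntegral_congr_ae hsΩ ?_
        filter_upwards [hζc] with ω hω _
        rw [hω]
      have e2 : ∫ ω in s, g ω * (P[Z|m']) ω ∂P = ∫ ω in s, (P[fun ω => g ω * Z ω|m']) ω ∂P := by
        refine setIntegral_congr_ae hsΩ ?_
        filter_upwards [hpull] with ω hω _
        rw [hω]
      rw [e1, e2, setIntegral_condExp hm' hgZ_int hs]
    rw [step1]
    -- Step 2 : ∫_s 1_A Z = ∫_s g Z via pushforward measures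
    -- measures
    set ν : Measure Ω := P.restrict s with hν
    have hfin : IsFiniteMeasure ν := by
      constructor
      rw [hν, Measure.restrict_apply_univ]
      exact measure_lt_top P s
    set μ₁ : Measure Ω := ν.restrict A with hμ₁
    set μ₂ : Measure Ω := ν.withDensity (fun ω => ((g ω).toNNReal : ℝ≥0∞)) with hμ₂
    have hgint_ν : Integrable g ν := integrable_of_ae_bound' hgmΩ.aestronglyMeasurable
      (ae_of_all _ hgb)
    have hmap : μ₁.map Z = μ₂.map Z := by
      ext t ht
      rw [Measure.map_apply hZ ht, Measure.map_apply hZ ht]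
      rw [hμ₁, Measure.restrict_apply (hZ ht), hν,
        Measure.restrict_apply ((hZ ht).inter hA)]
      rw [hμ₂, withDensity_apply _ (hZ ht)]
      have hB : MeasurableSet (A ∩ Z ⁻¹' t) := hA.inter (hZ ht)
      have hindB : Integrable ((A ∩ Z ⁻¹' t).indicator (fun _ => (1:ℝ))) P :=
        (integrable_const (1:ℝ)).indicator hB
      have hindT : Integrable ((Z ⁻¹' t).indicator (fun _ => (1:ℝ))) P :=
        (integrable_const (1:ℝ)).indicator (hZ ht)
      have hgit : Integrable (fun ω => g ω * (Z ⁻¹' t).indicator (fun _ => (1:ℝ)) ω) P := by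
        refine integrable_of_ae_bound'
          ((hgmΩ.mul (measurable_one.indicator (hZ ht))).aestronglyMeasurable)
          (ae_of_all _ fun ω => ?_ : ∀ᵐ ω ∂P, _ ≤ (1:ℝ))
        rw [abs_mul]
        have h1 : |(Z ⁻¹' t).indicator (fun _ => (1:ℝ)) ω| ≤ 1 := by
          by_cases h : ω ∈ Z ⁻¹' t <;>
            simp [Set.indicator_of_mem, Set.indicator_of_notMem, h]
        calc |g ω| * |(Z ⁻¹' t).indicator (fun _ => (1:ℝ)) ω| ≤ 1 * 1 :=
              mul_le_mul (hgb ω) h1 (abs_nonneg _) zero_le_one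
          _ = 1 := one_mul _
      have hreal : (P ((Z ⁻¹' t ∩ A) ∩ s)).toReal
          = ∫ ω in s, g ω * (Z ⁻¹' t).indicator (fun _ => (1:ℝ)) ω ∂P := by
        have h1 : (P ((Z ⁻¹' t ∩ A) ∩ s)).toReal
            = ∫ ω in s, (A ∩ Z ⁻¹' t).indicator (fun _ => (1:ℝ)) ω ∂P := by
          rw [integral_indicator_const (1:ℝ) hB, measureReal_restrict_apply hB]
          simp [Set.inter_comm A (Z ⁻¹' t), measureReal_def]
        rw [h1, ← setIntegral_condExp hm' hindB hs]
        have h2 : ∫ ω in s, (P[(A ∩ Z ⁻¹' t).indicator (fun _ => (1:ℝ))|m']) ω ∂P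
            = ∫ ω in s, g ω * (P[(Z ⁻¹' t).indicator (fun _ => (1:ℝ))|m']) ω ∂P := by
          refine setIntegral_congr_ae hsΩ ?_
          filter_upwards [hind t ht, hgc] with ω h₁ h₂ _
          rw [h₁, h₂]
        rw [h2]
        have hpull2 : P[fun ω => g ω * (Z ⁻¹' t).indicator (fun _ => (1:ℝ)) ω|m']
            =ᵐ[P] fun ω => g ω * (P[(Z ⁻¹' t).indicator (fun _ => (1:ℝ))|m']) ω :=
          condExp_mul_of_stronglyMeasurable_left hgm.stronglyMeasurable hgit hindT
        have h3 : ∫ ω in s, g ω * (P[(Z ⁻¹' t).indicator (fun _ => (1:ℝ))|m']) ω ∂P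
            = ∫ ω in s, (P[fun ω => g ω * (Z ⁻¹' t).indicator (fun _ => (1:ℝ)) ω|m']) ω ∂P := by
          refine setIntegral_congr_ae hsΩ ?_
          filter_upwards [hpull2] with ω hω _
          rw [hω]
        rw [h3, setIntegral_condExp hm' hgit hs]
      have hμs : P ((Z ⁻¹' t ∩ A) ∩ s) ≠ ⊤ := measure_ne_top _ _
      have hlin : ∫⁻ ω in Z ⁻¹' t, ((g ω).toNNReal : ℝ≥0∞) ∂ν
          = ENNReal.ofReal (∫ ω in Z ⁻¹' t, g ω ∂ν) := by
        rw [ofReal_integral_eq_lintegral_ofReal (hgint_ν.restrict)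
          (ae_of_all _ hg0)]
        rfl
      rw [hlin]
      have h4 : ∫ ω in Z ⁻¹' t, g ω ∂ν
          = ∫ ω in s, g ω * (Z ⁻¹' t).indicator (fun _ => (1:ℝ)) ω ∂P := by
        rw [hν, ← integral_indicator (hZ ht)]
        refine setIntegral_congr_ae hsΩ (ae_of_all _ fun ω _ => ?_)
        by_cases h : ω ∈ Z ⁻¹' t
        · rw [Set.indicator_of_mem h, Set.indicator_of_mem h, mul_one]
        · rw [Set.indicator_of_notMem h, Set.indicator_of_notMem h, mul_zero]
      rw [h4, ← hreal, ENNReal.ofReal_toReal hμs]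
    have hZ_int_μ₁ : ∫ ω, Z ω ∂μ₁ = ∫ ω, Z ω ∂μ₂ := by
      have i1 : ∫ ω, Z ω ∂μ₁ = ∫ x, x ∂(μ₁.map Z) :=
        (integral_map hZ.aemeasurable aestronglyMeasurable_id).symm
      have i2 : ∫ ω, Z ω ∂μ₂ = ∫ x, x ∂(μ₂.map Z) :=
        (integral_map hZ.aemeasurable aestronglyMeasurable_id).symm
      rw [i1, i2, hmap]
    have e3 : ∫ ω in s, A.indicator (fun _ => (1:ℝ)) ω * Z ω ∂P = ∫ ω, Z ω ∂μ₁ := by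
      rw [hμ₁, hν, ← integral_indicator hA]
      refine setIntegral_congr_ae hsΩ (ae_of_all _ fun ω _ => ?_)
      by_cases h : ω ∈ A
      · rw [Set.indicator_of_mem h, Set.indicator_of_mem h, one_mul]
      · rw [Set.indicator_of_notMem h, Set.indicator_of_notMem h, zero_mul]
    have e4 : ∫ ω in s, g ω * Z ω ∂P = ∫ ω, Z ω ∂μ₂ := by
      rw [hμ₂, integral_withDensity_eq_integral_smul (hgmΩ.real_toNNReal) Z, hν]
      refine setIntegral_congr_ae hsΩ (ae_of_all _ fun ω _ => ?_)
      simp [NNReal.smul_def, Real.coe_toNNReal _ (hg0 ω)]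
    rw [e3, e4, hZ_int_μ₁]
  -- conclude via uniqueness of conditional expectation
  refine (ae_eq_condExp_of_forall_setIntegral_eq hm' hint_ind
    (fun s _ _ => hgζ_int.integrableOn) (fun s hs _ => key s hs) ?_).symm
  exact StronglyMeasurable.aestronglyMeasurable (hgm.stronglyMeasurable.mul hζm.stronglyMeasurable)

set_option maxHeartbeats 1000000 in
lemma master_lemma {Ω 𝒳 : Type*} [mΩ : MeasurableSpace Ω] [m𝒳 : MeasurableSpace 𝒳]
    (P : Measure Ω) [IsProbabilityMeasure P]
    (X : Ω → 𝒳) (hX : Measurable X)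
    (W : Ω → ℝ) (hWm : Measurable W) (hWbin : ∀ ω, W ω = 0 ∨ W ω = 1)
    (Y0 Y1 : Ω → ℝ) (hY0m : Measurable Y0) (hY1m : Measurable Y1)
    (CY : ℝ) (hYbdd : ∀ ω, |Y0 ω| ≤ CY ∧ |Y1 ω| ≤ CY)
    (Y : Ω → ℝ) (hSUTVA : ∀ ω, Y ω = W ω * Y1 ω + (1 - W ω) * Y0 ω)
    (e μ0 μ1 : 𝒳 → ℝ)
    (hprop : P[W|sigmaAlg X] =ᵐ[P] (fun ω => e (X ω)))
    (h1 : P[fun ω => W ω * Y1 ω|sigmaAlg X] =ᵐ[P] fun ω => e (X ω) * μ1 (X ω))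
    (h0 : P[fun ω => (1 - W ω) * Y0 ω|sigmaAlg X] =ᵐ[P] fun ω => (1 - e (X ω)) * μ0 (X ω))
    (hoverlap : ∀ᵐ ω ∂P, 0 < e (X ω) ∧ e (X ω) < 1)
    (r : 𝒳 → ℝ) (hrm : Measurable r) (hrbin : ∀ x, r x = 0 ∨ r x = 1)
    (τt m0t m1t : 𝒳 → ℝ) (hτtm : Measurable τt) (hm0tm : Measurable m0t) (hm1tm : Measurable m1t)
    (Cτt : ℝ) (hτtb : ∀ x, |τt x| ≤ Cτt)
    (Cmt : ℝ) (hmtb : ∀ x, |m0t x| ≤ Cmt ∧ |m1t x| ≤ Cmt)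
    (et : 𝒳 → ℝ) (hetm : Measurable et)
    (hetov : ∀ᵐ ω ∂P, 0 < et (X ω) ∧ et (X ω) < 1)
    (Mb : ℝ) (hMb : ∀ᵐ ω ∂P, r (X ω) / (1 - et (X ω)) + (1 - r (X ω)) / et (X ω) ≤ Mb)
    (hcase : ∀ᵐ ω ∂P, et (X ω) = e (X ω) ∨ (m0t (X ω) = μ0 (X ω) ∧ m1t (X ω) = μ1 (X ω))) :
    P[(fun ω => (W ω * r (X ω) + (1 - W ω) * (1 - r (X ω))) * τt (X ω) - (r (X ω) / (1 - et (X ω)) + (1 - r (X ω)) / et (X ω)) * (W ω - et (X ω)) * (Y ω - r (X ω) * m0t (X ω) - (1 - r (X ω)) * m1t (X ω)))|sigmaAlg X]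
      =ᵐ[P] (fun ω => (r (X ω) * e (X ω) + (1 - r (X ω)) * (1 - e (X ω))) * (τt (X ω) - (μ1 (X ω) - μ0 (X ω)))) := by
  have hm' : sigmaAlg X ≤ mΩ := hX.comap_le
  have hXm' : Measurable[sigmaAlg X] X := Measurable.of_comap_le le_rfl
  -- the coefficient functions on 𝒳
  set b : 𝒳 → ℝ := fun x => r x / (1 - et x) + (1 - r x) / et x with hb_def
  set c : 𝒳 → ℝ := fun x => r x * m0t x + (1 - r x) * m1t x with hc_def
  set c0 : 𝒳 → ℝ := fun x => (1 - r x) * τt x - b x * et x * c x with hc0_def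
  set c1 : 𝒳 → ℝ := fun x => (2 * r x - 1) * τt x + b x * c x with hc1_def
  set g1 : 𝒳 → ℝ := fun x => -(b x * (1 - et x)) with hg1_def
  set g0 : 𝒳 → ℝ := fun x => b x * et x with hg0_def
  have hbm : Measurable b := (hrm.div (measurable_const.sub hetm)).add
    ((measurable_const.sub hrm).div hetm)
  have hcm : Measurable c := (hrm.mul hm0tm).add ((measurable_const.sub hrm).mul hm1tm)
  have hc0m : Measurable c0 := ((measurable_const.sub hrm).mul hτtm).sub
    ((hbm.mul hetm).mul hcm)
  have hc1m : Measurable c1 := (((measurable_const.mul hrm).sub measurable_const).mul hτtm).add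
    (hbm.mul hcm)
  have hg1m : Measurable g1 := (hbm.mul (measurable_const.sub hetm)).neg
  have hg0m : Measurable g0 := hbm.mul hetm
  -- bound constant
  set K : ℝ := |Cτt| + (|Mb| + 1) * (|Cmt| + 1) + 1 with hK_def
  have hK1 : 1 ≤ K := by
    rw [hK_def]
    nlinarith [abs_nonneg Cτt, abs_nonneg Mb, abs_nonneg Cmt,
      mul_nonneg (abs_nonneg Mb) (abs_nonneg Cmt)]
  have habs2 : ∀ x y X' Y' : ℝ, |x| ≤ X' → |y| ≤ Y' → |x * y| ≤ X' * Y' := by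
    intro x y X' Y' hx hy
    rw [abs_mul]
    exact mul_le_mul hx hy (abs_nonneg _) (le_trans (abs_nonneg _) hx)
  -- a.e. bounds for the coefficients
  have haeb : ∀ᵐ ω ∂P, |c0 (X ω)| ≤ K ∧ |c1 (X ω)| ≤ K ∧ |g1 (X ω)| ≤ K ∧ |g0 (X ω)| ≤ K := by
    filter_upwards [hetov, hMb] with ω hov hmb
    obtain ⟨hlt0, hlt1⟩ := hov
    have h1et : (0:ℝ) < 1 - et (X ω) := by linarith
    have hr01 : 0 ≤ r (X ω) ∧ r (X ω) ≤ 1 := by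
      rcases hrbin (X ω) with h | h <;> rw [h] <;> norm_num
    have hb0 : 0 ≤ b (X ω) := by
      simp only [hb_def]
      exact add_nonneg (div_nonneg hr01.1 h1et.le)
        (div_nonneg (by linarith [hr01.2]) hlt0.le)
    have hbM : b (X ω) ≤ Mb := by simp only [hb_def]; exact hmb
    have hbub : |b (X ω)| ≤ |Mb| := by
      rw [abs_of_nonneg hb0]; exact hbM.trans (le_abs_self _)
    have hetb : |et (X ω)| ≤ 1 := abs_le.2 ⟨by linarith, by linarith⟩
    have h1etb : |1 - et (X ω)| ≤ 1 := abs_le.2 ⟨by linarith, by linarith⟩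
    have h1r : |1 - r (X ω)| ≤ 1 := by rcases hrbin (X ω) with h | h <;> rw [h] <;> norm_num
    have h2r : |2 * r (X ω) - 1| ≤ 1 := by
      rcases hrbin (X ω) with h | h <;> rw [h] <;> norm_num
    have hτ : |τt (X ω)| ≤ |Cτt| := (hτtb _).trans (le_abs_self _)
    have hcb : |c (X ω)| ≤ |Cmt| := by
      rcases hrbin (X ω) with h | h <;> simp only [hc_def, h] <;> simp
      · exact ((hmtb (X ω)).2).trans (le_abs_self _)
      · exact ((hmtb (X ω)).1).trans (le_abs_self _)
    have hnl := mul_nonneg (abs_nonneg Mb) (abs_nonneg Cmt)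
    refine ⟨?_, ?_, ?_, ?_⟩
    · calc |c0 (X ω)| ≤ |(1 - r (X ω)) * τt (X ω)| + |b (X ω) * et (X ω) * c (X ω)| := by
            simp only [hc0_def]; exact abs_sub _ _
        _ ≤ 1 * |Cτt| + (|Mb| * 1) * |Cmt| :=
            add_le_add (habs2 _ _ _ _ h1r hτ) (habs2 _ _ _ _ (habs2 _ _ _ _ hbub hetb) hcb)
        _ ≤ K := by rw [hK_def]; nlinarith [abs_nonneg Cτt, abs_nonneg Mb, abs_nonneg Cmt]
    · calc |c1 (X ω)| ≤ |(2 * r (X ω) - 1) * τt (X ω)| + |b (X ω) * c (X ω)| := by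
            simp only [hc1_def]; exact abs_add_le _ _
        _ ≤ 1 * |Cτt| + |Mb| * |Cmt| :=
            add_le_add (habs2 _ _ _ _ h2r hτ) (habs2 _ _ _ _ hbub hcb)
        _ ≤ K := by rw [hK_def]; nlinarith [abs_nonneg Cτt, abs_nonneg Mb, abs_nonneg Cmt]
    · calc |g1 (X ω)| = |b (X ω) * (1 - et (X ω))| := by simp only [hg1_def, abs_neg]
        _ ≤ |Mb| * 1 := habs2 _ _ _ _ hbub h1etb
        _ ≤ K := by rw [hK_def]; nlinarith [abs_nonneg Cτt, abs_nonneg Mb, abs_nonneg Cmt]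
    · calc |g0 (X ω)| = |b (X ω) * et (X ω)| := by simp only [hg0_def]
        _ ≤ |Mb| * 1 := habs2 _ _ _ _ hbub hetb
        _ ≤ K := by rw [hK_def]; nlinarith [abs_nonneg Cτt, abs_nonneg Mb, abs_nonneg Cmt]
  -- clamping function
  set cl : ℝ → ℝ := fun y => max (-K) (min K y) with hcl_def
  have hclm : Measurable cl := measurable_const.max (measurable_const.min measurable_id)
  have hclb : ∀ y, |cl y| ≤ K := by
    intro y
    simp only [hcl_def]
    rw [abs_le]
    exact ⟨le_max_left _ _, max_le (by linarith) (min_le_left _ _)⟩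
  have hcleq : ∀ y, |y| ≤ K → cl y = y := by
    intro y hy
    rw [abs_le] at hy
    simp only [hcl_def]
    rw [min_eq_right hy.2]
    exact max_eq_right hy.1
  -- clamped coefficients on Ω
  set C0 : Ω → ℝ := fun ω => cl (c0 (X ω)) with hC0_def
  set C1 : Ω → ℝ := fun ω => cl (c1 (X ω)) with hC1_def
  set D1 : Ω → ℝ := fun ω => cl (g1 (X ω)) with hD1_def
  set D0 : Ω → ℝ := fun ω => cl (g0 (X ω)) with hD0_def
  have hC0m' : StronglyMeasurable[sigmaAlg X] C0 :=
    (hclm.comp (hc0m.comp hXm')).stronglyMeasurable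
  have hC1m' : StronglyMeasurable[sigmaAlg X] C1 :=
    (hclm.comp (hc1m.comp hXm')).stronglyMeasurable
  have hD1m' : StronglyMeasurable[sigmaAlg X] D1 :=
    (hclm.comp (hg1m.comp hXm')).stronglyMeasurable
  have hD0m' : StronglyMeasurable[sigmaAlg X] D0 :=
    (hclm.comp (hg0m.comp hXm')).stronglyMeasurable
  have hC0mΩ : Measurable C0 := hclm.comp (hc0m.comp hX)
  have hC1mΩ : Measurable C1 := hclm.comp (hc1m.comp hX)
  have hD1mΩ : Measurable D1 := hclm.comp (hg1m.comp hX)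
  have hD0mΩ : Measurable D0 := hclm.comp (hg0m.comp hX)
  -- integrability
  have hWb : ∀ ω, |W ω| ≤ 1 := fun ω => by rcases hWbin ω with h | h <;> rw [h] <;> norm_num
  have hW1b : ∀ ω, |1 - W ω| ≤ 1 := fun ω => by
    rcases hWbin ω with h | h <;> rw [h] <;> norm_num
  have hY1b : ∀ ω, |Y1 ω| ≤ |CY| := fun ω => (hYbdd ω).2.trans (le_abs_self _)
  have hY0b : ∀ ω, |Y0 ω| ≤ |CY| := fun ω => (hYbdd ω).1.trans (le_abs_self _)
  have hintW : Integrable W P :=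
    integrable_of_ae_bound' hWm.aestronglyMeasurable (ae_of_all _ hWb)
  have hintC0 : Integrable C0 P :=
    integrable_of_ae_bound' hC0mΩ.aestronglyMeasurable (ae_of_all _ fun ω => hclb _)
  have hintt1 : Integrable (fun ω => C1 ω * W ω) P :=
    integrable_of_ae_bound' (hC1mΩ.mul hWm).aestronglyMeasurable
      (ae_of_all _ fun ω => habs2 _ _ _ _ (hclb _) (hWb ω) : ∀ᵐ ω ∂P, _ ≤ K * 1)
  have hintWY1 : Integrable (fun ω => W ω * Y1 ω) P :=
    integrable_of_ae_bound' (hWm.mul hY1m).aestronglyMeasurable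
      (ae_of_all _ fun ω => habs2 _ _ _ _ (hWb ω) (hY1b ω) : ∀ᵐ ω ∂P, _ ≤ 1 * |CY|)
  have hintW1Y0 : Integrable (fun ω => (1 - W ω) * Y0 ω) P :=
    integrable_of_ae_bound' ((measurable_const.sub hWm).mul hY0m).aestronglyMeasurable
      (ae_of_all _ fun ω => habs2 _ _ _ _ (hW1b ω) (hY0b ω) : ∀ᵐ ω ∂P, _ ≤ 1 * |CY|)
  have hintt2 : Integrable (fun ω => D1 ω * (W ω * Y1 ω)) P :=
    integrable_of_ae_bound' (hD1mΩ.mul (hWm.mul hY1m)).aestronglyMeasurable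
      (ae_of_all _ fun ω => habs2 _ _ _ _ (hclb _) (habs2 _ _ _ _ (hWb ω) (hY1b ω))
        : ∀ᵐ ω ∂P, _ ≤ K * (1 * |CY|))
  have hintt3 : Integrable (fun ω => D0 ω * ((1 - W ω) * Y0 ω)) P :=
    integrable_of_ae_bound' (hD0mΩ.mul ((measurable_const.sub hWm).mul hY0m)).aestronglyMeasurable
      (ae_of_all _ fun ω => habs2 _ _ _ _ (hclb _) (habs2 _ _ _ _ (hW1b ω) (hY0b ω))
        : ∀ᵐ ω ∂P, _ ≤ K * (1 * |CY|))
  -- pointwise decomposition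
  have hdecomp : (fun ω => (W ω * r (X ω) + (1 - W ω) * (1 - r (X ω))) * τt (X ω) - (r (X ω) / (1 - et (X ω)) + (1 - r (X ω)) / et (X ω)) * (W ω - et (X ω)) * (Y ω - r (X ω) * m0t (X ω) - (1 - r (X ω)) * m1t (X ω)))
      =ᵐ[P] fun ω => C0 ω + C1 ω * W ω + D1 ω * (W ω * Y1 ω) + D0 ω * ((1 - W ω) * Y0 ω) := by
    filter_upwards [haeb] with ω hb4
    obtain ⟨ha, hb', hcc, hd⟩ := hb4
    simp only [hC0_def, hC1_def, hD1_def, hD0_def]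
    rw [hcleq _ ha, hcleq _ hb', hcleq _ hcc, hcleq _ hd]
    simp only [hc0_def, hc1_def, hg1_def, hg0_def, hb_def, hc_def]
    rw [hSUTVA ω]
    rcases hWbin ω with h | h <;> rw [h] <;> ring
  -- conditional expectation computation
  refine (condExp_congr_ae hdecomp).trans ?_
  have hA1 : P[(fun ω => C0 ω + C1 ω * W ω + D1 ω * (W ω * Y1 ω) + D0 ω * ((1 - W ω) * Y0 ω))|sigmaAlg X]
      =ᵐ[P] P[(fun ω => C0 ω + C1 ω * W ω + D1 ω * (W ω * Y1 ω))|sigmaAlg X]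
        + P[(fun ω => D0 ω * ((1 - W ω) * Y0 ω))|sigmaAlg X] :=
    condExp_add ((hintC0.add hintt1).add hintt2) hintt3 _
  have hA2 : P[(fun ω => C0 ω + C1 ω * W ω + D1 ω * (W ω * Y1 ω))|sigmaAlg X]
      =ᵐ[P] P[(fun ω => C0 ω + C1 ω * W ω)|sigmaAlg X]
        + P[(fun ω => D1 ω * (W ω * Y1 ω))|sigmaAlg X] :=
    condExp_add (hintC0.add hintt1) hintt2 _
  have hA3 : P[(fun ω => C0 ω + C1 ω * W ω)|sigmaAlg X]
      =ᵐ[P] P[C0|sigmaAlg X] + P[(fun ω => C1 ω * W ω)|sigmaAlg X] :=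
    condExp_add hintC0 hintt1 _
  have hp0 : P[C0|sigmaAlg X] =ᵐ[P] C0 :=
    (condExp_of_stronglyMeasurable hm' hC0m' hintC0).symm ▸ EventuallyEq.rfl
  have hp1 : P[(fun ω => C1 ω * W ω)|sigmaAlg X] =ᵐ[P] fun ω => C1 ω * e (X ω) :=
    (condExp_mul_of_stronglyMeasurable_left hC1m' hintt1 hintW).trans (EventuallyEq.rfl.mul hprop)
  have hp2 : P[(fun ω => D1 ω * (W ω * Y1 ω))|sigmaAlg X]
      =ᵐ[P] fun ω => D1 ω * (e (X ω) * μ1 (X ω)) :=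
    (condExp_mul_of_stronglyMeasurable_left hD1m' hintt2 hintWY1).trans (EventuallyEq.rfl.mul h1)
  have hp3 : P[(fun ω => D0 ω * ((1 - W ω) * Y0 ω))|sigmaAlg X]
      =ᵐ[P] fun ω => D0 ω * ((1 - e (X ω)) * μ0 (X ω)) :=
    (condExp_mul_of_stronglyMeasurable_left hD0m' hintt3 hintW1Y0).trans (EventuallyEq.rfl.mul h0)
  have hsum : P[(fun ω => C0 ω + C1 ω * W ω + D1 ω * (W ω * Y1 ω) + D0 ω * ((1 - W ω) * Y0 ω))|sigmaAlg X]
      =ᵐ[P] fun ω => C0 ω + C1 ω * e (X ω) + D1 ω * (e (X ω) * μ1 (X ω))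
        + D0 ω * ((1 - e (X ω)) * μ0 (X ω)) := by
    filter_upwards [hA1, hA2, hA3, hp0, hp1, hp2, hp3] with ω k1 k2 k3 q0 q1 q2 q3
    rw [k1, Pi.add_apply, k2, Pi.add_apply, k3, Pi.add_apply, q0, q1, q2, q3]
  refine hsum.trans ?_
  -- final algebraic identity
  filter_upwards [haeb, hetov, hoverlap, hcase] with ω hb4 hov hoe hcs
  obtain ⟨ha, hb', hcc, hd⟩ := hb4
  simp only [hC0_def, hC1_def, hD1_def, hD0_def]
  rw [hcleq _ ha, hcleq _ hb', hcleq _ hcc, hcleq _ hd]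
  simp only [hc0_def, hc1_def, hg1_def, hg0_def, hb_def, hc_def]
  have het0 : et (X ω) ≠ 0 := ne_of_gt hov.1
  have het1 : (1:ℝ) - et (X ω) ≠ 0 := ne_of_gt (by linarith [hov.2])
  have he0 : e (X ω) ≠ 0 := ne_of_gt hoe.1
  have he1 : (1:ℝ) - e (X ω) ≠ 0 := ne_of_gt (by linarith [hoe.2])
  rcases hcs with hc | ⟨hq0, hq1⟩
  · rw [hc]
    rcases hrbin (X ω) with h | h <;> rw [h] <;> field_simp <;> ring
  · rw [hq0, hq1]
    rcases hrbin (X ω) with h | h <;> rw [h] <;> field_simp <;> ring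

theorem stmt_11
    {Ω 𝒳 : Type*} [MeasurableSpace Ω] [StandardBorelSpace Ω] [MeasurableSpace 𝒳]
    (P : Measure Ω) [IsProbabilityMeasure P]
    (X : Ω → 𝒳) (hX : Measurable X)
    (W : Ω → ℝ) (hWm : Measurable W) (hWbin : ∀ ω, W ω = 0 ∨ W ω = 1)
    (Y0 Y1 : Ω → ℝ) (hY0m : Measurable Y0) (hY1m : Measurable Y1)
    (CY : ℝ) (hYbdd : ∀ ω, |Y0 ω| ≤ CY ∧ |Y1 ω| ≤ CY)
    (Y : Ω → ℝ) (hSUTVA : ∀ ω, Y ω = W ω * Y1 ω + (1 - W ω) * Y0 ω)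
    (hUnconf : CondIndepFun (sigmaAlg X) hX.comap_le W (fun ω => (Y0 ω, Y1 ω)) P)
    (e : 𝒳 → ℝ) (hem : Measurable e)
    (hprop : P[W|sigmaAlg X] =ᵐ[P] (fun ω => e (X ω)))
    (hoverlap : ∀ᵐ ω ∂P, 0 < e (X ω) ∧ e (X ω) < 1)
    (μ0 μ1 : 𝒳 → ℝ) (hμ0m : Measurable μ0) (hμ1m : Measurable μ1)
    (Cμ : ℝ) (hμbdd : ∀ x, |μ0 x| ≤ Cμ ∧ |μ1 x| ≤ Cμ)
    (hμ0c : P[Y0|sigmaAlg X] =ᵐ[P] (fun ω => μ0 (X ω)))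
    (hμ1c : P[Y1|sigmaAlg X] =ᵐ[P] (fun ω => μ1 (X ω)))
    (pstar : ℝ) (hpstar : pstar ∈ Set.Ioo (0:ℝ) (1/2))
    (r : 𝒳 → ℝ) (hrm : Measurable r) (hrbin : ∀ x, r x = 0 ∨ r x = 1)
    (hr1 : ∀ x, e x < pstar → r x = 1) (hr0 : ∀ x, 1 - pstar < e x → r x = 0)
    (τt m0t m1t : 𝒳 → ℝ) (hτtm : Measurable τt) (hm0tm : Measurable m0t) (hm1tm : Measurable m1t)
    (Cτt : ℝ) (hτtb : ∀ x, |τt x| ≤ Cτt)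
    (Cmt : ℝ) (hmtb : ∀ x, |m0t x| ≤ Cmt ∧ |m1t x| ≤ Cmt)
    (et : 𝒳 → ℝ) (hetm : Measurable et)
    (hetov : ∀ᵐ ω ∂P, 0 < et (X ω) ∧ et (X ω) < 1)
    (Mb : ℝ) (hMb : ∀ᵐ ω ∂P, r (X ω) / (1 - et (X ω)) + (1 - r (X ω)) / et (X ω) ≤ Mb)
    :
    (P[(fun ω => (W ω * r (X ω) + (1 - W ω) * (1 - r (X ω))) * τt (X ω) - (r (X ω) / (1 - e (X ω)) + (1 - r (X ω)) / e (X ω)) * (W ω - e (X ω)) * (Y ω - r (X ω) * m0t (X ω) - (1 - r (X ω)) * m1t (X ω)))|sigmaAlg X] =ᵐ[P] (fun ω => (r (X ω) * e (X ω) + (1 - r (X ω)) * (1 - e (X ω))) * (τt (X ω) - (μ1 (X ω) - μ0 (X ω))))) ∧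
    (P[(fun ω => (W ω * r (X ω) + (1 - W ω) * (1 - r (X ω))) * τt (X ω) - (r (X ω) / (1 - et (X ω)) + (1 - r (X ω)) / et (X ω)) * (W ω - et (X ω)) * (Y ω - r (X ω) * μ0 (X ω) - (1 - r (X ω)) * μ1 (X ω)))|sigmaAlg X] =ᵐ[P] (fun ω => (r (X ω) * e (X ω) + (1 - r (X ω)) * (1 - e (X ω))) * (τt (X ω) - (μ1 (X ω) - μ0 (X ω))))) ∧
    (P[(fun ω => (W ω * r (X ω) + (1 - W ω) * (1 - r (X ω))) * τt (X ω) - (r (X ω) / (1 - e (X ω)) + (1 - r (X ω)) / e (X ω)) * (W ω - e (X ω)) * (Y ω - r (X ω) * μ0 (X ω) - (1 - r (X ω)) * μ1 (X ω)))|sigmaAlg X] =ᵐ[P] (fun ω => (r (X ω) * e (X ω) + (1 - r (X ω)) * (1 - e (X ω))) * (τt (X ω) - (μ1 (X ω) - μ0 (X ω))))) ∧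
    ((P[(fun ω => (W ω * r (X ω) + (1 - W ω) * (1 - r (X ω))) * τt (X ω) - (r (X ω) / (1 - e (X ω)) + (1 - r (X ω)) / e (X ω)) * (W ω - e (X ω)) * (Y ω - r (X ω) * m0t (X ω) - (1 - r (X ω)) * m1t (X ω)))|sigmaAlg X] =ᵐ[P] 0 ∧
      P[(fun ω => (W ω * r (X ω) + (1 - W ω) * (1 - r (X ω))) * τt (X ω) - (r (X ω) / (1 - et (X ω)) + (1 - r (X ω)) / et (X ω)) * (W ω - et (X ω)) * (Y ω - r (X ω) * μ0 (X ω) - (1 - r (X ω)) * μ1 (X ω)))|sigmaAlg X] =ᵐ[P] 0 ∧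
      P[(fun ω => (W ω * r (X ω) + (1 - W ω) * (1 - r (X ω))) * τt (X ω) - (r (X ω) / (1 - e (X ω)) + (1 - r (X ω)) / e (X ω)) * (W ω - e (X ω)) * (Y ω - r (X ω) * μ0 (X ω) - (1 - r (X ω)) * μ1 (X ω)))|sigmaAlg X] =ᵐ[P] 0) ↔
      (∀ᵐ ω ∂P, τt (X ω) = μ1 (X ω) - μ0 (X ω))) ∧
    (P[(fun ω => (W ω * r (X ω) + (1 - W ω) * (1 - r (X ω))) * (fun x => μ1 x - μ0 x) (X ω) - (r (X ω) / (1 - e (X ω)) + (1 - r (X ω)) / e (X ω)) * (W ω - e (X ω)) * (Y ω - r (X ω) * μ0 (X ω) - (1 - r (X ω)) * μ1 (X ω)))|sigmaAlg X] =ᵐ[P] 0 ∧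
      ∃ C : ℝ, ∀ᵐ ω ∂P,
        (P[(fun ω' => ((W ω' * r (X ω') + (1 - W ω') * (1 - r (X ω'))) * (fun x => μ1 x - μ0 x) (X ω') - (r (X ω') / (1 - e (X ω')) + (1 - r (X ω')) / e (X ω')) * (W ω' - e (X ω')) * (Y ω' - r (X ω') * μ0 (X ω') - (1 - r (X ω')) * μ1 (X ω'))) ^ 2)|sigmaAlg X]) ω ≤ C) := by
  have hm' : sigmaAlg X ≤ ‹MeasurableSpace Ω› := hX.comap_le
  have hXm' : Measurable[sigmaAlg X] X := Measurable.of_comap_le le_rfl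
  have hWb : ∀ ω, |W ω| ≤ 1 := fun ω => by rcases hWbin ω with h | h <;> rw [h] <;> norm_num
  have hintW : Integrable W P :=
    integrable_of_ae_bound' hWm.aestronglyMeasurable (ae_of_all _ hWb)
  have hY1b : ∀ ω, |Y1 ω| ≤ |CY| := fun ω => (hYbdd ω).2.trans (le_abs_self _)
  have hY0b : ∀ ω, |Y0 ω| ≤ |CY| := fun ω => (hYbdd ω).1.trans (le_abs_self _)
  have hμ0b : ∀ ω, |μ0 (X ω)| ≤ |Cμ| := fun ω => ((hμbdd (X ω)).1).trans (le_abs_self _)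
  have hμ1b : ∀ ω, |μ1 (X ω)| ≤ |Cμ| := fun ω => ((hμbdd (X ω)).2).trans (le_abs_self _)
  -- clamped propensity and its complement
  set g : Ω → ℝ := fun ω => min 1 (max 0 (e (X ω))) with hg_def
  set g' : Ω → ℝ := fun ω => min 1 (max 0 (1 - e (X ω))) with hg'_def
  have hgm' : Measurable[sigmaAlg X] g :=
    measurable_const.min (measurable_const.max (hem.comp hXm'))
  have hg'm' : Measurable[sigmaAlg X] g' :=
    measurable_const.min (measurable_const.max (measurable_const.sub (hem.comp hXm')))
  have hg0 : ∀ ω, 0 ≤ g ω := fun ω => le_min zero_le_one (le_max_left _ _)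
  have hg1 : ∀ ω, g ω ≤ 1 := fun ω => min_le_left _ _
  have hg'0 : ∀ ω, 0 ≤ g' ω := fun ω => le_min zero_le_one (le_max_left _ _)
  have hg'1 : ∀ ω, g' ω ≤ 1 := fun ω => min_le_left _ _
  have hgae : (fun ω => e (X ω)) =ᵐ[P] g := by
    filter_upwards [hoverlap] with ω h
    simp only [hg_def]
    rw [max_eq_right h.1.le, min_eq_right h.2.le]
  have hg'ae : (fun ω => 1 - e (X ω)) =ᵐ[P] g' := by
    filter_upwards [hoverlap] with ω h
    simp only [hg'_def]
    rw [max_eq_right (by linarith [h.2] : (0:ℝ) ≤ 1 - e (X ω)),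
      min_eq_right (by linarith [h.1])]
  -- treatment sets
  have hA : MeasurableSet (W ⁻¹' ({1} : Set ℝ)) := hWm (measurableSet_singleton 1)
  have hA' : MeasurableSet (W ⁻¹' (({1} : Set ℝ)ᶜ)) := hWm (measurableSet_singleton 1).compl
  have hindW : (W ⁻¹' ({1} : Set ℝ)).indicator (fun _ => (1:ℝ)) = W := by
    funext ω
    rcases hWbin ω with h | h
    · rw [Set.indicator_of_notMem (by simp [h] : ω ∉ W ⁻¹' ({1} : Set ℝ)), h]
    · rw [Set.indicator_of_mem (by simp [h] : ω ∈ W ⁻¹' ({1} : Set ℝ)), h]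
  have hindW' : (W ⁻¹' (({1} : Set ℝ)ᶜ)).indicator (fun _ => (1:ℝ)) = fun ω => 1 - W ω := by
    funext ω
    rcases hWbin ω with h | h
    · rw [Set.indicator_of_mem (by simp [h] : ω ∈ W ⁻¹' (({1} : Set ℝ)ᶜ)), h]; norm_num
    · rw [Set.indicator_of_notMem (by simp [h] : ω ∉ W ⁻¹' (({1} : Set ℝ)ᶜ)), h]; norm_num
  have hgc : P[(W ⁻¹' ({1} : Set ℝ)).indicator (fun _ => (1:ℝ))|sigmaAlg X] =ᵐ[P] g := by
    rw [hindW]; exact hprop.trans hgae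
  have hgc' : P[(W ⁻¹' (({1} : Set ℝ)ᶜ)).indicator (fun _ => (1:ℝ))|sigmaAlg X] =ᵐ[P] g' := by
    rw [hindW']
    have hsub : P[(fun ω => 1 - W ω)|sigmaAlg X]
        =ᵐ[P] P[(fun _ => (1:ℝ))|sigmaAlg X] - P[W|sigmaAlg X] :=
      condExp_sub (integrable_const 1) hintW _
    refine hsub.trans ?_
    have hc1 : P[(fun _ => (1:ℝ))|sigmaAlg X] = fun _ => (1:ℝ) := condExp_const hm' 1
    refine EventuallyEq.trans ?_ hg'ae
    filter_upwards [hprop] with ω hω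
    rw [Pi.sub_apply, hc1, hω]
  -- conditional independence, separated
  have hciW1 : CondIndepFun (sigmaAlg X) hX.comap_le W Y1 P :=
    hUnconf.comp measurable_id measurable_snd
  have hciW0 : CondIndepFun (sigmaAlg X) hX.comap_le W Y0 P :=
    hUnconf.comp measurable_id measurable_fst
  have hind1 : ∀ t : Set ℝ, MeasurableSet t →
      ((P⟦(W ⁻¹' ({1} : Set ℝ)) ∩ Y1 ⁻¹' t|sigmaAlg X⟧) =ᵐ[P]
        fun ω => (P⟦W ⁻¹' ({1} : Set ℝ)|sigmaAlg X⟧) ω * (P⟦Y1 ⁻¹' t|sigmaAlg X⟧) ω) :=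
    fun t ht => (condIndepFun_iff_condExp_inter_preimage_eq_mul hWm hY1m).mp hciW1 {1} t
      (measurableSet_singleton 1) ht
  have hind0 : ∀ t : Set ℝ, MeasurableSet t →
      ((P⟦(W ⁻¹' (({1} : Set ℝ)ᶜ)) ∩ Y0 ⁻¹' t|sigmaAlg X⟧) =ᵐ[P]
        fun ω => (P⟦W ⁻¹' (({1} : Set ℝ)ᶜ)|sigmaAlg X⟧) ω * (P⟦Y0 ⁻¹' t|sigmaAlg X⟧) ω) :=
    fun t ht => (condIndepFun_iff_condExp_inter_preimage_eq_mul hWm hY0m).mp hciW0 ({1}ᶜ) t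
      (measurableSet_singleton 1).compl ht
  -- the two product identities
  have h1 : P[fun ω => W ω * Y1 ω|sigmaAlg X] =ᵐ[P] fun ω => e (X ω) * μ1 (X ω) := by
    have haux := condexp_indicator_mul_aux P hm' hA hY1m hY1b hgm'
      ((hμ1m.comp hXm')) hg0 hg1 hμ1b hgc hμ1c hind1
    rw [show (fun ω => (W ⁻¹' ({1} : Set ℝ)).indicator (fun _ => (1:ℝ)) ω * Y1 ω)
        = fun ω => W ω * Y1 ω by funext ω; rw [hindW]] at haux
    exact haux.trans ((hgae.symm).mul EventuallyEq.rfl)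
  have h0 : P[fun ω => (1 - W ω) * Y0 ω|sigmaAlg X] =ᵐ[P] fun ω => (1 - e (X ω)) * μ0 (X ω) := by
    have haux := condexp_indicator_mul_aux P hm' hA' hY0m hY0b hg'm'
      ((hμ0m.comp hXm')) hg'0 hg'1 hμ0b hgc' hμ0c hind0
    rw [show (fun ω => (W ⁻¹' (({1} : Set ℝ)ᶜ)).indicator (fun _ => (1:ℝ)) ω * Y0 ω)
        = fun ω => (1 - W ω) * Y0 ω by funext ω; rw [hindW']] at haux
    exact haux.trans ((hg'ae.symm).mul EventuallyEq.rfl)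
  -- pointwise bound for the balancing weights with the true propensity
  obtain ⟨hps0, hps2⟩ := hpstar
  have hbe : ∀ x, 0 ≤ r x / (1 - e x) + (1 - r x) / e x ∧
      r x / (1 - e x) + (1 - r x) / e x ≤ 1 / pstar := by
    intro x
    rcases hrbin x with h | h
    · have hge : pstar ≤ e x := by
        by_contra hlt
        push_neg at hlt
        rw [hr1 x hlt] at h
        norm_num at h
      rw [h]
      constructor
      · rw [zero_div, zero_add, sub_zero]
        exact (div_pos one_pos (by linarith)).le
      · rw [zero_div, zero_add, sub_zero]
        rw [div_le_div_iff₀ (by linarith) hps0]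
        linarith
    · have hle : e x ≤ 1 - pstar := by
        by_contra hlt
        push_neg at hlt
        rw [hr0 x hlt] at h
        norm_num at h
      have h1e : pstar ≤ 1 - e x := by linarith
      rw [h]
      constructor
      · rw [sub_self, zero_div, add_zero]
        exact (div_pos one_pos (by linarith)).le
      · rw [sub_self, zero_div, add_zero]
        rw [div_le_div_iff₀ (by linarith) hps0]
        linarith
  have hMbe : ∀ᵐ ω ∂P, r (X ω) / (1 - e (X ω)) + (1 - r (X ω)) / e (X ω) ≤ 1 / pstar :=
    ae_of_all _ fun ω => (hbe (X ω)).2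
  have hτ4b : ∀ x, |(fun x => μ1 x - μ0 x) x| ≤ |Cμ| + |Cμ| := fun x =>
    (abs_sub _ _).trans (add_le_add (((hμbdd x).2).trans (le_abs_self _))
      (((hμbdd x).1).trans (le_abs_self _)))
  -- the four master-lemma instances
  have key1 := master_lemma P X hX W hWm hWbin Y0 Y1 hY0m hY1m CY hYbdd Y hSUTVA e μ0 μ1
    hprop h1 h0 hoverlap r hrm hrbin τt m0t m1t hτtm hm0tm hm1tm Cτt hτtb Cmt hmtb
    e hem hoverlap (1 / pstar) hMbe (ae_of_all _ fun ω => Or.inl rfl)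
  have key2 := master_lemma P X hX W hWm hWbin Y0 Y1 hY0m hY1m CY hYbdd Y hSUTVA e μ0 μ1
    hprop h1 h0 hoverlap r hrm hrbin τt μ0 μ1 hτtm hμ0m hμ1m Cτt hτtb Cμ hμbdd
    et hetm hetov Mb hMb (ae_of_all _ fun ω => Or.inr ⟨rfl, rfl⟩)
  have key3 := master_lemma P X hX W hWm hWbin Y0 Y1 hY0m hY1m CY hYbdd Y hSUTVA e μ0 μ1
    hprop h1 h0 hoverlap r hrm hrbin τt μ0 μ1 hτtm hμ0m hμ1m Cτt hτtb Cμ hμbdd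
    e hem hoverlap (1 / pstar) hMbe (ae_of_all _ fun ω => Or.inl rfl)
  have key4 := master_lemma P X hX W hWm hWbin Y0 Y1 hY0m hY1m CY hYbdd Y hSUTVA e μ0 μ1
    hprop h1 h0 hoverlap r hrm hrbin (fun x => μ1 x - μ0 x) μ0 μ1 (hμ1m.sub hμ0m) hμ0m hμ1m
    (|Cμ| + |Cμ|) hτ4b Cμ hμbdd
    e hem hoverlap (1 / pstar) hMbe (ae_of_all _ fun ω => Or.inl rfl)
  refine ⟨key1, key2, key3, ?_, ?_, ?_⟩
  · -- the iff
    constructor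
    · rintro ⟨-, -, h3⟩
      have hz := key3.symm.trans h3
      filter_upwards [hz, hoverlap] with ω h h'
      rw [Pi.zero_apply] at h
      rcases mul_eq_zero.mp h with h'' | h''
      · exfalso
        rcases hrbin (X ω) with hr | hr <;> rw [hr] at h'' <;> nlinarith [h'.1, h'.2]
      · exact sub_eq_zero.mp h''
    · intro h
      have hz : (fun ω => (r (X ω) * e (X ω) + (1 - r (X ω)) * (1 - e (X ω)))
          * (τt (X ω) - (μ1 (X ω) - μ0 (X ω)))) =ᵐ[P] 0 := by
        filter_upwards [h] with ω hω
        rw [Pi.zero_apply, hω, sub_self, mul_zero]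
      exact ⟨key1.trans hz, key2.trans hz, key3.trans hz⟩
  · -- the estimator at the truth has zero conditional mean
    refine key4.trans (ae_of_all _ fun ω => ?_)
    rw [Pi.zero_apply]
    simp
  · -- bounded conditional second moment
    have hps : (0:ℝ) < 1 / pstar := by positivity
    set D : ℝ := (|Cμ| + |Cμ|) + (1 / pstar) * (|CY| + |Cμ|) with hD_def
    have hD0 : 0 ≤ D := by
      rw [hD_def]
      have := abs_nonneg Cμ
      have := abs_nonneg CY
      nlinarith
    have habs2 : ∀ x y X' Y' : ℝ, |x| ≤ X' → |y| ≤ Y' → |x * y| ≤ X' * Y' := by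
      intro x y X' Y' hx hy
      rw [abs_mul]
      exact mul_le_mul hx hy (abs_nonneg _) (le_trans (abs_nonneg _) hx)
    have hYmeq : Y = fun ω => W ω * Y1 ω + (1 - W ω) * Y0 ω := funext hSUTVA
    have hYm : Measurable Y := by
      rw [hYmeq]
      exact (hWm.mul hY1m).add ((measurable_const.sub hWm).mul hY0m)
    have hrX : Measurable (fun ω => r (X ω)) := hrm.comp hX
    have heX : Measurable (fun ω => e (X ω)) := hem.comp hX
    have hμ0X : Measurable (fun ω => μ0 (X ω)) := hμ0m.comp hX
    have hμ1X : Measurable (fun ω => μ1 (X ω)) := hμ1m.comp hX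
    have hΨm : Measurable (fun ω' => ((W ω' * r (X ω') + (1 - W ω') * (1 - r (X ω'))) * (fun x => μ1 x - μ0 x) (X ω') - (r (X ω') / (1 - e (X ω')) + (1 - r (X ω')) / e (X ω')) * (W ω' - e (X ω')) * (Y ω' - r (X ω') * μ0 (X ω') - (1 - r (X ω')) * μ1 (X ω')))) := by
      exact (((hWm.mul hrX).add ((measurable_const.sub hWm).mul
        (measurable_const.sub hrX))).mul (hμ1X.sub hμ0X)).sub
        ((((hrX.div (measurable_const.sub heX)).add
          ((measurable_const.sub hrX).div heX)).mul (hWm.sub heX)).mul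
          ((hYm.sub (hrX.mul hμ0X)).sub ((measurable_const.sub hrX).mul hμ1X)))
    have hbound : ∀ᵐ ω' ∂P, ((W ω' * r (X ω') + (1 - W ω') * (1 - r (X ω'))) * (fun x => μ1 x - μ0 x) (X ω') - (r (X ω') / (1 - e (X ω')) + (1 - r (X ω')) / e (X ω')) * (W ω' - e (X ω')) * (Y ω' - r (X ω') * μ0 (X ω') - (1 - r (X ω')) * μ1 (X ω'))) ^ 2 ≤ D ^ 2 := by
      filter_upwards [hoverlap] with ω hov
      have hb0 := (hbe (X ω)).1
      have hbub : |r (X ω) / (1 - e (X ω)) + (1 - r (X ω)) / e (X ω)| ≤ 1 / pstar := by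
        rw [abs_of_nonneg hb0]
        exact (hbe (X ω)).2
      have hwe : |W ω - e (X ω)| ≤ 1 := by
        rcases hWbin ω with h | h <;> rw [h] <;>
          exact abs_le.2 ⟨by linarith [hov.1, hov.2], by linarith [hov.1, hov.2]⟩
      have hAabs : |W ω * r (X ω) + (1 - W ω) * (1 - r (X ω))| ≤ 1 := by
        rcases hWbin ω with h | h <;> rcases hrbin (X ω) with h' | h' <;>
          rw [h, h'] <;> norm_num
      have hYabs : |Y ω| ≤ |CY| := by
        rw [hSUTVA ω]
        rcases hWbin ω with h | h <;> rw [h] <;> simp only [zero_mul, one_mul, sub_zero,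
          sub_self, zero_add, add_zero]
        · exact hY0b ω
        · exact hY1b ω
      have hcabs : |r (X ω) * μ0 (X ω) + (1 - r (X ω)) * μ1 (X ω)| ≤ |Cμ| := by
        rcases hrbin (X ω) with h' | h' <;> rw [h'] <;> simp only [zero_mul, one_mul,
          sub_zero, sub_self, zero_add, add_zero]
        · exact hμ1b ω
        · exact hμ0b ω
      have hYc : |Y ω - r (X ω) * μ0 (X ω) - (1 - r (X ω)) * μ1 (X ω)| ≤ |CY| + |Cμ| := by
        have hre : Y ω - r (X ω) * μ0 (X ω) - (1 - r (X ω)) * μ1 (X ω)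
            = Y ω - (r (X ω) * μ0 (X ω) + (1 - r (X ω)) * μ1 (X ω)) := by ring
        rw [hre]
        exact (abs_sub _ _).trans (add_le_add hYabs hcabs)
      have hle : |(W ω * r (X ω) + (1 - W ω) * (1 - r (X ω))) * (fun x => μ1 x - μ0 x) (X ω) - (r (X ω) / (1 - e (X ω)) + (1 - r (X ω)) / e (X ω)) * (W ω - e (X ω)) * (Y ω - r (X ω) * μ0 (X ω) - (1 - r (X ω)) * μ1 (X ω))| ≤ D := by
        calc |(W ω * r (X ω) + (1 - W ω) * (1 - r (X ω))) * (fun x => μ1 x - μ0 x) (X ω) - (r (X ω) / (1 - e (X ω)) + (1 - r (X ω)) / e (X ω)) * (W ω - e (X ω)) * (Y ω - r (X ω) * μ0 (X ω) - (1 - r (X ω)) * μ1 (X ω))|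
            ≤ |(W ω * r (X ω) + (1 - W ω) * (1 - r (X ω))) * (fun x => μ1 x - μ0 x) (X ω)|
              + |(r (X ω) / (1 - e (X ω)) + (1 - r (X ω)) / e (X ω)) * (W ω - e (X ω)) * (Y ω - r (X ω) * μ0 (X ω) - (1 - r (X ω)) * μ1 (X ω))| := abs_sub _ _
          _ ≤ 1 * (|Cμ| + |Cμ|) + ((1 / pstar) * 1) * (|CY| + |Cμ|) :=
              add_le_add (habs2 _ _ _ _ hAabs (hτ4b (X ω)))
                (habs2 _ _ _ _ (habs2 _ _ _ _ hbub hwe) hYc)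
          _ = D := by rw [hD_def]; ring
      have := pow_le_pow_left₀ (abs_nonneg _) hle 2
      rwa [sq_abs] at this
    have hintΨsq : Integrable (fun ω' => ((W ω' * r (X ω') + (1 - W ω') * (1 - r (X ω'))) * (fun x => μ1 x - μ0 x) (X ω') - (r (X ω') / (1 - e (X ω')) + (1 - r (X ω')) / e (X ω')) * (W ω' - e (X ω')) * (Y ω' - r (X ω') * μ0 (X ω') - (1 - r (X ω')) * μ1 (X ω'))) ^ 2) P := by
      refine integrable_of_ae_bound' (C := D ^ 2) (hΨm.pow_const 2).aestronglyMeasurable ?_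
      filter_upwards [hbound] with ω hω
      rwa [abs_of_nonneg (sq_nonneg _)]
    refine ⟨D ^ 2, ?_⟩
    have hmono := condExp_mono (m := sigmaAlg X) hintΨsq (integrable_const (D ^ 2)) hbound
    filter_upwards [hmono] with ω hω
    have hc := condExp_const (μ := P) hm' (D ^ 2)
    rw [hc] at hω
    exact hω
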